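/- arXiv:1804.03355 — 4 statements merged into one kernel-verified Lean document; each statement's English description precedes it below -/
import Mathlib

section
/- Let λ > 0 and t₀ = (i-1)/n. With S as the continuous interpolation of resolvent products, ∫_{t₀}^{1} S(s)² ds ≤ (1/(λ+n)) ∑_{κ=i}^{n} (1+λ/n)^{-2(κ-i)} ≤ 2/λ. -/
open intervalIntegral Finset

theorem stmt_7 (l : ℝ) (hl : 0 < l) (n i : ℕ) (hn : 0 < n)
    (hi : 1 ≤ i) (hin : i ≤ n) :
    ((∫ s in (((i : ℝ) - 1) / n)..1,
        (∏ κ ∈ Finset.Icc i n,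
            (1 + l * (min s ((κ : ℝ) / n) - min s (((κ : ℝ) - 1) / n)))⁻¹) ^ 2)
      ≤ (1 / (l + n)) * ∑ κ ∈ Finset.Icc i n, ((1 + l / n)⁻¹) ^ (2 * (κ - i))) ∧
    (1 / (l + n)) * ∑ κ ∈ Finset.Icc i n, ((1 + l / n)⁻¹) ^ (2 * (κ - i)) ≤ 2 / l := by
  have hn' : (0:ℝ) < n := by exact_mod_cast hn
  set N := n + 1 - i with hN
  set q : ℝ := (1 + l / n)⁻¹ with hq
  have hq1 : (1:ℝ) < 1 + l / n := by
    have : 0 < l / n := div_pos hl hn'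
    linarith
  -- rewrite RHS sum over range N
  have hrhs : ∑ κ ∈ Finset.Icc i n, q ^ (2 * (κ - i)) = ∑ k ∈ Finset.range N, (q^2) ^ k := by
    rw [← Finset.Ico_add_one_right_eq_Icc, Finset.sum_Ico_eq_sum_range]
    refine Finset.sum_congr rfl fun k _ => ?_
    rw [Nat.add_sub_cancel_left, pow_mul]
  -- the grid
  set a : ℕ → ℝ := fun k => ((i:ℝ) - 1 + k) / n with ha
  have ha0 : a 0 = ((i:ℝ) - 1) / n := by simp [ha]
  have haN : a N = 1 := by
    simp only [ha, hN]
    rw [Nat.cast_sub (by omega : i ≤ n + 1)]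
    push_cast
    field_simp
    ring
  have hmono : ∀ k, a k ≤ a (k+1) := by
    intro k
    apply div_le_div_of_nonneg_right ?_ hn'.le
    push_cast; linarith
  -- continuity of the integrand
  set f : ℝ → ℝ := fun s => (∏ κ ∈ Finset.Icc i n,
      (1 + l * (min s ((κ : ℝ) / n) - min s (((κ : ℝ) - 1) / n)))⁻¹) ^ 2 with hf
  have hfac_pos : ∀ (κ : ℕ) (s : ℝ),
      0 < 1 + l * (min s ((κ : ℝ) / n) - min s (((κ : ℝ) - 1) / n)) := by
    intro κ s
    have h1 : min s (((κ : ℝ) - 1) / n) ≤ min s ((κ : ℝ) / n) := by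
      apply min_le_min le_rfl
      exact div_le_div_of_nonneg_right (by linarith) hn'.le
    nlinarith [mul_nonneg hl.le (sub_nonneg.2 h1)]
  have hcont : Continuous f := by
    apply Continuous.pow
    apply continuous_finset_prod
    intro κ _
    apply Continuous.inv₀
    · exact continuous_const.add (Continuous.mul continuous_const
        ((continuous_id.min continuous_const).sub (continuous_id.min continuous_const)))
    · intro s; exact (hfac_pos κ s).ne'
  have hint : ∀ k, IntervalIntegrable f MeasureTheory.volume (a k) (a (k+1)) :=
    fun k => hcont.intervalIntegrable _ _
  -- key pointwise identity on each subinterval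
  have hkey : ∀ k < N, ∀ s ∈ Set.uIcc (a k) (a (k+1)),
      f s = (q ^ 2) ^ k * ((1 + l * (s - a k))⁻¹) ^ 2 := by
    intro k hk s hs
    rw [Set.uIcc_of_le (hmono k)] at hs
    obtain ⟨hs1, hs2⟩ := hs
    have hs2' : s ≤ ((i : ℝ) + k) / n := by
      refine hs2.trans (le_of_eq ?_)
      simp only [ha]; push_cast; ring
    have hprod : (∏ κ ∈ Finset.Icc i n,
        (1 + l * (min s ((κ : ℝ) / n) - min s (((κ : ℝ) - 1) / n)))⁻¹)
        = q ^ k * (1 + l * (s - a k))⁻¹ := by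
      rw [← Finset.Ico_add_one_right_eq_Icc, Finset.prod_Ico_eq_prod_range]
      have hNN : n + 1 - i = N := rfl
      rw [hNN, ← Finset.prod_range_mul_prod_Ico _ (show k + 1 ≤ N from hk)]
      have htail : (∏ m ∈ Finset.Ico (k+1) N,
          (1 + l * (min s (((i + m : ℕ) : ℝ) / n) - min s ((((i + m : ℕ) : ℝ) - 1) / n)))⁻¹) = 1 := by
        apply Finset.prod_eq_one
        intro m hm
        have hm1 : k + 1 ≤ m := (Finset.mem_Ico.1 hm).1
        have h1 : s ≤ (((i + m : ℕ) : ℝ) - 1) / n := by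
          refine hs2'.trans ?_
          apply div_le_div_of_nonneg_right ?_ hn'.le
          push_cast
          have : (k : ℝ) + 1 ≤ (m : ℝ) := by exact_mod_cast hm1
          linarith
        have h2 : s ≤ ((i + m : ℕ) : ℝ) / n := by
          refine h1.trans ?_
          exact div_le_div_of_nonneg_right (by linarith) hn'.le
        rw [min_eq_left h1, min_eq_left h2]
        simp
      rw [htail, mul_one, Finset.prod_range_succ]
      have hhead : (∏ m ∈ Finset.range k,
          (1 + l * (min s (((i + m : ℕ) : ℝ) / n) - min s ((((i + m : ℕ) : ℝ) - 1) / n)))⁻¹) = q ^ k := by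
        rw [show q ^ k = ∏ _m ∈ Finset.range k, q by
          rw [Finset.prod_const, Finset.card_range]]
        apply Finset.prod_congr rfl
        intro m hm
        have hm1 : m < k := Finset.mem_range.1 hm
        have h1 : ((i + m : ℕ) : ℝ) / n ≤ s := by
          refine le_trans ?_ hs1
          apply div_le_div_of_nonneg_right ?_ hn'.le
          push_cast
          have : (m : ℝ) + 1 ≤ (k : ℝ) := by exact_mod_cast hm1
          linarith
        have h2 : (((i + m : ℕ) : ℝ) - 1) / n ≤ s := by
          refine le_trans ?_ h1
          exact div_le_div_of_nonneg_right (by linarith) hn'.le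
        rw [min_eq_right h1, min_eq_right h2]
        rw [hq]
        congr 1
        field_simp
        ring
      rw [hhead]
      congr 1
      have h1 : s ≤ ((i + k : ℕ) : ℝ) / n := by
        refine hs2'.trans (le_of_eq ?_); push_cast; ring
      have h2 : (((i + k : ℕ) : ℝ) - 1) / n ≤ s := by
        refine le_trans (le_of_eq ?_) hs1
        rw [ha]; push_cast; ring_nf
      rw [min_eq_left h1, min_eq_right h2]
      congr 2
      rw [ha]; push_cast; ring
    rw [hf]
    simp only
    rw [hprod, mul_pow, ← pow_mul, mul_comm k 2, pow_mul]
  -- value of integral on each subinterval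
  have hstep : ∀ k < N, (∫ s in a k..a (k+1), f s) = (q ^ 2) ^ k * (1 / (l + n)) := by
    intro k hk
    rw [intervalIntegral.integral_congr (g := fun s => (q ^ 2) ^ k * ((1 + l * (s - a k))⁻¹) ^ 2)
      (fun s hs => hkey k hk s hs)]
    rw [intervalIntegral.integral_const_mul]
    congr 1
    have hder : ∀ s ∈ Set.uIcc (a k) (a (k+1)),
        HasDerivAt (fun t => -(1/l) * (1 + l * (t - a k))⁻¹) (((1 + l * (s - a k))⁻¹) ^ 2) s := by
      intro s hs
      rw [Set.uIcc_of_le (hmono k)] at hs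
      have hne : (1 + l * (s - a k)) ≠ 0 := by
        nlinarith [mul_nonneg hl.le (sub_nonneg.2 hs.1)]
      have h1 : HasDerivAt (fun t : ℝ => 1 + l * (t - a k)) l s := by
        simpa using (((hasDerivAt_id s).sub_const (a k)).const_mul l).const_add 1
      have h3 := (h1.inv hne).const_mul (-(1/l))
      refine h3.congr_deriv ?_
      rw [inv_pow]
      field_simp
    have hcont2 : ContinuousOn (fun s : ℝ => ((1 + l * (s - a k))⁻¹) ^ 2)
        (Set.uIcc (a k) (a (k+1))) := by
      apply ContinuousOn.pow
      apply ContinuousOn.inv₀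
      · exact (continuous_const.add
          (continuous_const.mul (continuous_id.sub continuous_const))).continuousOn
      · intro s hs
        rw [Set.uIcc_of_le (hmono k)] at hs
        nlinarith [mul_nonneg hl.le (sub_nonneg.2 hs.1)]
    rw [intervalIntegral.integral_eq_sub_of_hasDerivAt hder hcont2.intervalIntegrable]
    have hdiff : a (k+1) - a k = 1 / n := by
      rw [ha]; push_cast; field_simp
      ring
    have hrw : a (k+1) = a k + 1 / n := by linarith
    rw [hrw]
    have e1 : a k + 1 / (n:ℝ) - a k = 1 / n := by ring
    have e2 : a k - a k = 0 := sub_self _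
    rw [e1, e2, mul_zero, add_zero, inv_one]
    have hln : l + (n : ℝ) ≠ 0 := by positivity
    have hone : (1:ℝ) + l * (1 / n) ≠ 0 := by positivity
    field_simp
    ring
  -- assemble the integral
  have hmain : (∫ s in (a 0)..(a N), f s)
      = ∑ k ∈ Finset.range N, (q ^ 2) ^ k * (1 / (l + n)) := by
    rw [← intervalIntegral.sum_integral_adjacent_intervals (fun k _ => hint k)]
    exact Finset.sum_congr rfl fun k hk => hstep k (Finset.mem_range.1 hk)
  constructor
  · refine le_of_eq ?_
    calc (∫ s in (((i : ℝ) - 1) / n)..1, f s)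
        = ∫ s in (a 0)..(a N), f s := by rw [ha0, haN]
      _ = ∑ k ∈ Finset.range N, (q ^ 2) ^ k * (1 / (l + n)) := hmain
      _ = (1 / (l + n)) * ∑ κ ∈ Finset.Icc i n, q ^ (2 * (κ - i)) := by
          rw [hrhs, ← Finset.sum_mul, mul_comm]
  · rw [hrhs]
    set x := q ^ 2 with hx
    have hq0 : 0 < q := inv_pos.2 (by linarith)
    have hqlt : q < 1 := by
      rw [hq]
      exact inv_lt_one_of_one_lt₀ hq1
    have hx0 : 0 ≤ x := by positivity
    have hx1 : x < 1 := by
      rw [hx]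
      calc q ^ 2 < 1 ^ 2 := by
            apply pow_lt_pow_left₀ hqlt hq0.le
            norm_num
        _ = 1 := one_pow 2
    have hsum_le : ∑ k ∈ Finset.range N, x ^ k ≤ 1 / (1 - x) := by
      rw [geom_sum_eq (ne_of_lt hx1)]
      have heq : (x ^ N - 1) / (x - 1) = (1 - x ^ N) / (1 - x) := by
        rw [← neg_div_neg_eq]; ring_nf
      rw [heq]
      gcongr
      · nlinarith [pow_nonneg hx0 N]
    calc (1 / (l + (n:ℝ))) * ∑ k ∈ Finset.range N, x ^ k
        ≤ (1 / (l + (n:ℝ))) * (1 / (1 - x)) := by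
          apply mul_le_mul_of_nonneg_left hsum_le (by positivity)
      _ ≤ 2 / l := by
          have hxval : 1 - x = (l * (l + 2 * n)) / ((l + n) ^ 2) := by
            rw [hx, hq]
            have h1 : (1:ℝ) + l / n ≠ 0 := by positivity
            have h2 : l + (n:ℝ) ≠ 0 := by positivity
            field_simp
            ring
          rw [hxval, one_div_div]
          have heq2 : (1 / (l + (n:ℝ))) * ((l + ↑n) ^ 2 / (l * (l + 2 * ↑n)))
              = (l + ↑n) / (l * (l + 2 * ↑n)) := by
            field_simp
          rw [heq2, div_le_div_iff₀ (by positivity) hl]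
          nlinarith
end

section
/- Let λ > 0 and let 0 = τ₀ < ... < τ_N = 1 be a partition refining the uniform grid {0, 1/n, ..., 1} (i.e., each k/n is some τ_η). For 1 ≤ i ≤ n, ∑_{η : i/n ≤ τ_η ≤ 1} (∏_{ν : τ_ν ∈ ((i-1)/n, τ_η]} (1+λ(τ_ν - τ_{ν-1}))^{-1})² (τ_η - τ_{η-1}) ≤ 2/λ. -/
theorem stmt_9 (l : ℝ) (hl : 0 < l) (n N : ℕ) (hn : 0 < n) (τ : ℕ → ℝ)
    (hτ0 : τ 0 = 0) (hτN : τ N = 1) (hmono : ∀ ν < N, τ ν < τ (ν + 1))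
    (href : ∀ k ≤ n, ∃ η ≤ N, τ η = (k : ℝ) / n)
    (i : ℕ) (hi : 1 ≤ i) (hin : i ≤ n) :
    ∑ η ∈ (Finset.Icc 1 N).filter (fun η => (i : ℝ) / n ≤ τ η),
        (∏ ν ∈ (Finset.Icc 1 η).filter (fun ν => ((i : ℝ) - 1) / n < τ ν),
            (1 + l * (τ ν - τ (ν - 1)))⁻¹) ^ 2 * (τ η - τ (η - 1))
      ≤ 2 / l := by
  set g : ℕ → ℝ := fun η =>
    (∏ ν ∈ (Finset.Icc 1 η).filter (fun ν => ((i : ℝ) - 1) / n < τ ν),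
        (1 + l * (τ ν - τ (ν - 1)))⁻¹) ^ 2 with hg
  have hΔ : ∀ η, 1 ≤ η → η ≤ N → 0 < τ η - τ (η - 1) := by
    intro η h1 h2
    have := hmono (η - 1) (by omega)
    rw [Nat.sub_add_cancel h1] at this
    linarith
  have hgnn : ∀ η, 0 ≤ g η := fun η => sq_nonneg _
  have hIcc : ∀ η, 1 ≤ η → Finset.Icc 1 η = insert η (Finset.Icc 1 (η - 1)) := by
    intro η h1
    ext x
    simp only [Finset.mem_Icc, Finset.mem_insert]
    omega
  have hsplit : ∀ η, 1 ≤ η → ((i:ℝ) - 1) / n < τ η →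
      g η = ((1 + l * (τ η - τ (η - 1)))⁻¹) ^ 2 * g (η - 1) := by
    intro η h1 hcond
    simp only [hg]
    rw [hIcc η h1, Finset.filter_insert, if_pos hcond,
      Finset.prod_insert (by simp only [Finset.mem_filter, Finset.mem_Icc]; omega), mul_pow]
  have hsame : ∀ η, 1 ≤ η → ¬(((i:ℝ) - 1) / n < τ η) → g η = g (η - 1) := by
    intro η h1 hcond
    simp only [hg]
    rw [hIcc η h1, Finset.filter_insert, if_neg hcond]
  have hmonog : ∀ η, 1 ≤ η → η ≤ N → g η ≤ g (η - 1) := by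
    intro η h1 h2
    by_cases hcond : ((i:ℝ) - 1) / n < τ η
    · rw [hsplit η h1 hcond]
      have hΔη := hΔ η h1 h2
      have ha : (1:ℝ) < 1 + l * (τ η - τ (η - 1)) := by nlinarith
      have hb : (1 + l * (τ η - τ (η - 1)))⁻¹ < 1 := by
        rw [inv_lt_one_iff₀]; right; exact ha
      have hb0 : 0 ≤ (1 + l * (τ η - τ (η - 1)))⁻¹ := by positivity
      have hsq : ((1 + l * (τ η - τ (η - 1)))⁻¹) ^ 2 ≤ 1 := by nlinarith
      calc ((1 + l * (τ η - τ (η - 1)))⁻¹) ^ 2 * g (η - 1) ≤ 1 * g (η - 1) :=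
            mul_le_mul_of_nonneg_right hsq (hgnn (η - 1))
        _ = g (η - 1) := one_mul _
    · rw [hsame η h1 hcond]
  have htel : ∀ M, ∑ η ∈ Finset.Icc 1 M, (g (η - 1) - g η) = g 0 - g M := by
    intro M
    induction M with
    | zero => simp
    | succ m ih =>
      rw [Finset.sum_Icc_succ_top (by omega), ih]
      simp only [Nat.add_sub_cancel]
      ring
  have hg0 : g 0 = 1 := by simp [hg]
  have hkey : ∀ η ∈ (Finset.Icc 1 N).filter (fun η => (i : ℝ) / n ≤ τ η),
      2 * l * ((∏ ν ∈ (Finset.Icc 1 η).filter (fun ν => ((i : ℝ) - 1) / n < τ ν),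
          (1 + l * (τ ν - τ (ν - 1)))⁻¹) ^ 2 * (τ η - τ (η - 1))) ≤ g (η - 1) - g η := by
    intro η hη
    rw [Finset.mem_filter, Finset.mem_Icc] at hη
    obtain ⟨⟨h1, h2⟩, hcond⟩ := hη
    have hn' : (0:ℝ) < n := by positivity
    have hcond' : ((i:ℝ) - 1) / n < τ η := by
      refine lt_of_lt_of_le ?_ hcond
      rw [div_lt_div_iff₀ hn' hn']
      nlinarith
    have hΔη := hΔ η h1 h2
    have hsp := hsplit η h1 hcond'
    have ha : (1:ℝ) < 1 + l * (τ η - τ (η - 1)) := by nlinarith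
    set a : ℝ := 1 + l * (τ η - τ (η - 1)) with hadef
    have hc : a * a⁻¹ = 1 := mul_inv_cancel₀ (by linarith)
    have hg' : 0 ≤ g (η - 1) := hgnn (η - 1)
    show 2 * l * (g η * (τ η - τ (η - 1))) ≤ g (η - 1) - g η
    rw [hsp]
    have hc2 : a⁻¹ ^ 2 * a ^ 2 = 1 := by
      rw [← mul_pow, inv_mul_cancel₀ (by linarith)]; norm_num
    have h2l : 2 * l * (a⁻¹ ^ 2 * g (η - 1) * (τ η - τ (η - 1)))
        = 2 * (a - 1) * (a⁻¹ ^ 2 * g (η - 1)) := by rw [hadef]; ring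
    rw [h2l]
    nlinarith [mul_nonneg hg' (sq_nonneg (a⁻¹ * (a - 1))), hc2]
  have h2 : 2 * l * ∑ η ∈ (Finset.Icc 1 N).filter (fun η => (i : ℝ) / n ≤ τ η),
      (∏ ν ∈ (Finset.Icc 1 η).filter (fun ν => ((i : ℝ) - 1) / n < τ ν),
          (1 + l * (τ ν - τ (ν - 1)))⁻¹) ^ 2 * (τ η - τ (η - 1)) ≤ 1 := by
    rw [Finset.mul_sum]
    calc _ ≤ ∑ η ∈ (Finset.Icc 1 N).filter (fun η => (i : ℝ) / n ≤ τ η),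
          (g (η - 1) - g η) := Finset.sum_le_sum hkey
      _ ≤ ∑ η ∈ Finset.Icc 1 N, (g (η - 1) - g η) := by
          apply Finset.sum_le_sum_of_subset_of_nonneg (Finset.filter_subset _ _)
          intro η hη _
          rw [Finset.mem_Icc] at hη
          exact sub_nonneg.2 (hmonog η hη.1 hη.2)
      _ = g 0 - g N := htel N
      _ ≤ 1 := by rw [hg0]; linarith [hgnn N]
  rw [le_div_iff₀ hl]
  nlinarith
end

section
/- Let λ > 0, ξ ∈ ℝ, and 0 = τ₀ < ... < τ_N = 1 a partition of [0,1]. Then ∑_{η=1}^{N} λ · (∏_{ν=1}^{η} (1+λ(τ_ν - τ_{ν-1}))^{-1})² · ξ² · (τ_η - τ_{η-1}) ≤ 2 ξ². -/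
lemma tel_aux (g : ℕ → ℝ) (N : ℕ) :
    ∑ i ∈ Finset.Icc 1 N, (g (i - 1) - g i) = g 0 - g N := by
  induction N with
  | zero => simp
  | succ n ih =>
    rw [Finset.sum_Icc_succ_top (Nat.le_add_left 1 n), ih]
    simp

theorem stmt_10 (l ξ : ℝ) (hl : 0 < l) (N : ℕ) (τ : ℕ → ℝ)
    (hτ0 : τ 0 = 0) (hτN : τ N = 1) (hmono : ∀ ν < N, τ ν < τ (ν + 1)) :
    ∑ η ∈ Finset.Icc 1 N,
        l * (∏ ν ∈ Finset.Icc 1 η, (1 + l * (τ ν - τ (ν - 1)))⁻¹) ^ 2 * ξ ^ 2 *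
          (τ η - τ (η - 1))
      ≤ 2 * ξ ^ 2 := by
  set P : ℕ → ℝ := fun η => ∏ ν ∈ Finset.Icc 1 η, (1 + l * (τ ν - τ (ν - 1)))⁻¹ with hP
  have hΔ : ∀ ν, 1 ≤ ν → ν ≤ N → 0 < τ ν - τ (ν - 1) := by
    intro ν h1 h2
    have h := hmono (ν - 1) (by omega)
    have hν : ν - 1 + 1 = ν := by omega
    rw [hν] at h
    linarith
  have hcpos : ∀ ν, 1 ≤ ν → ν ≤ N → 0 < (1 + l * (τ ν - τ (ν - 1)))⁻¹ := by
    intro ν h1 h2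
    have := hΔ ν h1 h2
    have : 0 < 1 + l * (τ ν - τ (ν - 1)) := by nlinarith
    positivity
  have hPpos : ∀ η, η ≤ N → 0 < P η := by
    intro η hη
    apply Finset.prod_pos
    intro ν hν
    simp only [Finset.mem_Icc] at hν
    exact hcpos ν hν.1 (le_trans hν.2 hη)
  have key : ∀ η, 1 ≤ η → η ≤ N →
      l * (P η) ^ 2 * ξ ^ 2 * (τ η - τ (η - 1)) ≤ ((P (η - 1)) ^ 2 - (P η) ^ 2) * ξ ^ 2 := by
    intro η h1 h2
    have hη : η - 1 + 1 = η := by omega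
    have hrel : P η = P (η - 1) * (1 + l * (τ η - τ (η - 1)))⁻¹ := by
      rw [hP]
      simp only
      rw [← hη, Finset.prod_Icc_succ_top (by omega), hη]
    have hΔη := hΔ η h1 h2
    have hden : 0 < 1 + l * (τ η - τ (η - 1)) := by nlinarith
    have hc : (1 + l * (τ η - τ (η - 1)))⁻¹ * (1 + l * (τ η - τ (η - 1))) = 1 :=
      inv_mul_cancel₀ (ne_of_gt hden)
    have hPη := hPpos η h2
    have hξ : (0:ℝ) ≤ ξ ^ 2 := sq_nonneg ξ
    -- P(η-1) = P η * (1 + lΔ)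
    have hrel2 : P (η - 1) = P η * (1 + l * (τ η - τ (η - 1))) := by
      rw [hrel]
      field_simp
    rw [hrel2]
    have h1Δ : l * (τ η - τ (η - 1)) ≤ (1 + l * (τ η - τ (η - 1))) ^ 2 - 1 := by
      nlinarith [mul_pos hl hΔη, sq_nonneg (l * (τ η - τ (η - 1)))]
    calc l * (P η) ^ 2 * ξ ^ 2 * (τ η - τ (η - 1))
        = (P η) ^ 2 * (l * (τ η - τ (η - 1))) * ξ ^ 2 := by ring
      _ ≤ (P η) ^ 2 * ((1 + l * (τ η - τ (η - 1))) ^ 2 - 1) * ξ ^ 2 := by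
          apply mul_le_mul_of_nonneg_right _ hξ
          exact mul_le_mul_of_nonneg_left h1Δ (sq_nonneg _)
      _ = ((P η * (1 + l * (τ η - τ (η - 1)))) ^ 2 - (P η) ^ 2) * ξ ^ 2 := by ring
  have hsum : ∑ η ∈ Finset.Icc 1 N,
      l * (P η) ^ 2 * ξ ^ 2 * (τ η - τ (η - 1))
      ≤ ∑ η ∈ Finset.Icc 1 N, ((P (η - 1)) ^ 2 - (P η) ^ 2) * ξ ^ 2 := by
    apply Finset.sum_le_sum
    intro η hη
    simp only [Finset.mem_Icc] at hη
    exact key η hη.1 hη.2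
  have htel : ∑ η ∈ Finset.Icc 1 N, ((P (η - 1)) ^ 2 - (P η) ^ 2) * ξ ^ 2
      = ((P 0) ^ 2 - (P N) ^ 2) * ξ ^ 2 := by
    rw [← Finset.sum_mul]
    congr 1
    exact tel_aux (fun k => (P k) ^ 2) N
  have hP0 : P 0 = 1 := by simp [hP]
  have hPN := hPpos N le_rfl
  calc ∑ η ∈ Finset.Icc 1 N,
        l * (∏ ν ∈ Finset.Icc 1 η, (1 + l * (τ ν - τ (ν - 1)))⁻¹) ^ 2 * ξ ^ 2 *
          (τ η - τ (η - 1))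
      ≤ ((P 0) ^ 2 - (P N) ^ 2) * ξ ^ 2 := htel ▸ hsum
    _ ≤ 2 * ξ ^ 2 := by
        rw [hP0]
        nlinarith [sq_nonneg ξ, sq_nonneg (P N)]
end

section
/- Let λ > 0 and let 0 = t₀ < t₁ < ... < t_n = 1 be a grid with max step δmax and min step δmin satisfying δmax/δmin ≤ c for some c ≥ 1. Then ∑_{η=i}^{n} (∏_{ν=i}^{η} (1+λ(t_ν - t_{ν-1}))^{-1})² (t_η - t_{η-1}) ≤ 2c/λ for every 1 ≤ i ≤ n. -/
lemma key_telescope (l : ℝ) (hl : 0 < l) (i : ℕ) (d : ℕ → ℝ) (hd : ∀ ν, 0 < d ν) :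
    ∀ m : ℕ, ∑ η ∈ Finset.Icc i m, (∏ ν ∈ Finset.Icc i η, (1 + l * d ν)⁻¹) * d η
      = (1 - ∏ ν ∈ Finset.Icc i m, (1 + l * d ν)⁻¹) / l := by
  intro m
  induction m with
  | zero =>
    rcases Nat.eq_zero_or_pos i with hi0 | hi0
    · subst hi0
      simp only [Finset.Icc_self, Finset.sum_singleton, Finset.prod_singleton]
      have h0 : (0:ℝ) < 1 + l * d 0 := by have := hd 0; positivity
      field_simp
      ring
    · rw [Finset.Icc_eq_empty (by omega)]
      simp
  | succ m ih =>
    by_cases h : i ≤ m + 1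
    · rw [Finset.sum_Icc_succ_top h, Finset.prod_Icc_succ_top h, ih]
      have h0 : (0:ℝ) < 1 + l * d (m+1) := by have := hd (m+1); positivity
      have hP : (0:ℝ) < ∏ x ∈ Finset.Icc i m, (1 + l * d x) := by
        apply Finset.prod_pos
        intro ν _
        have := hd ν
        positivity
      field_simp
      ring
    · have e1 : Finset.Icc i (m+1) = ∅ := Finset.Icc_eq_empty (by omega)
      have e2 : Finset.Icc i m = ∅ := Finset.Icc_eq_empty (by omega)
      rw [e1]
      simp

theorem stmt_15 (l c : ℝ) (hl : 0 < l) (hc : 1 ≤ c) (n : ℕ) (hn : 0 < n)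
    (t : ℕ → ℝ) (ht0 : t 0 = 0) (htn : t n = 1)
    (hmono : ∀ ν < n, t ν < t (ν + 1))
    (hquasi : ∀ ν ∈ Finset.Icc 1 n, ∀ μ ∈ Finset.Icc 1 n,
      t ν - t (ν - 1) ≤ c * (t μ - t (μ - 1)))
    (i : ℕ) (hi : 1 ≤ i) (hin : i ≤ n) :
    ∑ η ∈ Finset.Icc i n,
        (∏ ν ∈ Finset.Icc i η, (1 + l * (t ν - t (ν - 1)))⁻¹) ^ 2 * (t η - t (η - 1))
      ≤ 2 * c / l := by
  set d : ℕ → ℝ := fun ν => if 1 ≤ ν ∧ ν ≤ n then t ν - t (ν - 1) else 1 with hd_def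
  have hd : ∀ ν, 0 < d ν := by
    intro ν
    simp only [hd_def]
    split_ifs with h
    · obtain ⟨h1, h2⟩ := h
      have := hmono (ν - 1) (by omega)
      have hν : ν - 1 + 1 = ν := by omega
      rw [hν] at this
      linarith
    · norm_num
  -- rewrite the sum using d
  have hsum_eq : ∑ η ∈ Finset.Icc i n,
        (∏ ν ∈ Finset.Icc i η, (1 + l * (t ν - t (ν - 1)))⁻¹) ^ 2 * (t η - t (η - 1))
      = ∑ η ∈ Finset.Icc i n, (∏ ν ∈ Finset.Icc i η, (1 + l * d ν)⁻¹) ^ 2 * d η := by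
    apply Finset.sum_congr rfl
    intro η hη
    rw [Finset.mem_Icc] at hη
    have hdη : d η = t η - t (η - 1) := by
      simp only [hd_def]; rw [if_pos ⟨by omega, hη.2⟩]
    rw [hdη]
    congr 1
    congr 1
    apply Finset.prod_congr rfl
    intro ν hν
    rw [Finset.mem_Icc] at hν
    simp only [hd_def]
    rw [if_pos ⟨by omega, by omega⟩]
  rw [hsum_eq]
  -- each product is in (0, 1]
  have hQ : ∀ η, 0 < (∏ ν ∈ Finset.Icc i η, (1 + l * d ν)⁻¹) ∧
      (∏ ν ∈ Finset.Icc i η, (1 + l * d ν)⁻¹) ≤ 1 := by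
    intro η
    constructor
    · apply Finset.prod_pos
      intro ν _
      have := hd ν
      positivity
    · apply Finset.prod_le_one
      · intro ν _
        have := hd ν
        positivity
      · intro ν _
        have h0 : (0:ℝ) < 1 + l * d ν := by have := hd ν; positivity
        rw [inv_le_one_iff₀]
        right
        nlinarith [hd ν]
  have hterm : ∀ η ∈ Finset.Icc i n,
      (∏ ν ∈ Finset.Icc i η, (1 + l * d ν)⁻¹) ^ 2 * d η
        ≤ (∏ ν ∈ Finset.Icc i η, (1 + l * d ν)⁻¹) * d η := by
    intro η _
    obtain ⟨h1, h2⟩ := hQ η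
    have hdη := hd η
    have hq : (∏ ν ∈ Finset.Icc i η, (1 + l * d ν)⁻¹) ^ 2
        ≤ ∏ ν ∈ Finset.Icc i η, (1 + l * d ν)⁻¹ := by nlinarith
    exact mul_le_mul_of_nonneg_right hq hdη.le
  calc ∑ η ∈ Finset.Icc i n, (∏ ν ∈ Finset.Icc i η, (1 + l * d ν)⁻¹) ^ 2 * d η
      ≤ ∑ η ∈ Finset.Icc i n, (∏ ν ∈ Finset.Icc i η, (1 + l * d ν)⁻¹) * d η :=
        Finset.sum_le_sum hterm
    _ = (1 - ∏ ν ∈ Finset.Icc i n, (1 + l * d ν)⁻¹) / l := key_telescope l hl i d hd n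
    _ ≤ 1 / l := by
        gcongr
        have := (hQ n).1
        linarith
    _ ≤ 2 * c / l := by
        gcongr
        linarith
end
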